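/- Let (Q,I) be a finite gentle bound quiver in which every generator of I either equals δ² for some loop δ, or lies in a saturated 3-cycle with three distinct vertices. Then (Q,I) is gentle-block-decomposable: it can be obtained by taking a disjoint union of blocks of type I (a single arrow with no relation), type II (a 3-cycle α,β,γ with αβ = βγ = γα = 0), and type loop (a loop δ with δ² = 0), and gluing vertices along a partial matching of vertices such that (1) no two vertices of the same block are matched, (2) no two loop-block vertices are matched, and (3) no two arrows connect the same pair of vertices in opposite directions after gluing. -/

import Mathlib

/-- A finite quiver: vertices, arrows, source and target maps. -/
structure Quiv where
  V : Type
  E : Type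
  s : E → V
  t : E → V

namespace Quiv

variable (Q : Quiv)

/-- A list of arrows is a path when consecutive arrows are composable. -/
def IsPath (p : List Q.E) : Prop :=
  List.Chain' (fun a b => Q.t a = Q.s b) p

/-- A path avoids the relation ideal `I` (generated by length-2 paths)
when no two consecutive arrows form a relation. -/
def AvoidsRel (I : Set (Q.E × Q.E)) (p : List Q.E) : Prop :=
  List.Chain' (fun a b => (a, b) ∉ I) p

/-- A saturated cycle: a cyclic sequence of composable arrows all of whose
(cyclically) consecutive compositions lie in `I`. -/
def IsSatCycle (I : Set (Q.E × Q.E)) {n : ℕ} (c : Fin (n + 1) → Q.E) : Prop :=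
  ∀ i : Fin (n + 1), Q.t (c i) = Q.s (c (i + 1)) ∧ (c i, c (i + 1)) ∈ I

/-- An arrow lies in some saturated cycle. -/
def InSatCycle (I : Set (Q.E × Q.E)) (e : Q.E) : Prop :=
  ∃ (n : ℕ) (c : Fin (n + 1) → Q.E), Q.IsSatCycle I c ∧ ∃ i, c i = e

/-- The conditions for `(Q, I)` to be a gentle bound quiver:
`I` consists of composable pairs (length-2 paths) — (G2) —, at most two
arrows in and out of each vertex (G1), and the uniqueness conditions (G3), (G4). -/
structure IsGentle (I : Set (Q.E × Q.E)) : Prop where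
  compat : ∀ p ∈ I, Q.t (Prod.fst p) = Q.s (Prod.snd p)
  g1out : ∀ (x : Q.V) (a b c : Q.E),
    Q.s a = x → Q.s b = x → Q.s c = x → a = b ∨ a = c ∨ b = c
  g1in : ∀ (x : Q.V) (a b c : Q.E),
    Q.t a = x → Q.t b = x → Q.t c = x → a = b ∨ a = c ∨ b = c
  g3l : ∀ β α α', (α, β) ∈ I → (α', β) ∈ I → α = α'
  g3r : ∀ β γ γ', (β, γ) ∈ I → (β, γ') ∈ I → γ = γ'
  g4l : ∀ β α α', Q.t α = Q.s β → Q.t α' = Q.s β → (α, β) ∉ I → (α', β) ∉ I → α = α'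
  g4r : ∀ β γ γ', Q.t β = Q.s γ → Q.t β = Q.s γ' → (β, γ) ∉ I → (β, γ') ∉ I → γ = γ'

end Quiv

/-- The three block types: type I (a single arrow), type II (a 3-cycle with relations
`αβ = βγ = γα = 0`), and type loop (a loop `δ` with `δ² = 0`). -/
inductive BlockType
  | typeI | typeII | typeLoop

/-- A gentle-block decomposition of a bound quiver `(Q, I)`: a partition of the arrows
into blocks of type I, II and loop, realizing `(Q, I)` as obtained from the disjoint
union of the blocks by gluing vertices along a partial matching such that
(1) no two vertices of the same block are matched (within each block the vertices stay
distinct, and each vertex of `Q` meets at most two blocks),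
(2) no two loop-block vertices are matched, and
(3) after gluing no two arrows connect the same pair of vertices in opposite
directions. -/
structure GentleBlockDecomposition (Q : Quiv) (I : Set (Q.E × Q.E)) where
  /-- the set of blocks -/
  B : Type
  /-- the type of each block -/
  btype : B → BlockType
  /-- the block containing each arrow -/
  blk : Q.E → B
  /-- a type-I block consists of a single arrow, with distinct endpoints -/
  typeI_arrows : ∀ b, btype b = BlockType.typeI →
    ∃ e, Q.s e ≠ Q.t e ∧ ∀ e', blk e' = b ↔ e' = e
  /-- a type-II block consists of a 3-cycle on three distinct vertices,
  with all three consecutive compositions in `I` -/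
  typeII_arrows : ∀ b, btype b = BlockType.typeII →
    ∃ e₁ e₂ e₃ : Q.E, (∀ e', blk e' = b ↔ (e' = e₁ ∨ e' = e₂ ∨ e' = e₃)) ∧
      e₁ ≠ e₂ ∧ e₂ ≠ e₃ ∧ e₁ ≠ e₃ ∧
      Q.t e₁ = Q.s e₂ ∧ Q.t e₂ = Q.s e₃ ∧ Q.t e₃ = Q.s e₁ ∧
      Q.s e₁ ≠ Q.s e₂ ∧ Q.s e₂ ≠ Q.s e₃ ∧ Q.s e₁ ≠ Q.s e₃ ∧
      (e₁, e₂) ∈ I ∧ (e₂, e₃) ∈ I ∧ (e₃, e₁) ∈ I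
  /-- a type-loop block consists of a single loop `δ` with `δ² ∈ I` -/
  typeLoop_arrows : ∀ b, btype b = BlockType.typeLoop →
    ∃ e, Q.s e = Q.t e ∧ (e, e) ∈ I ∧ ∀ e', blk e' = b ↔ e' = e
  /-- the relations of `I` are exactly the within-block relations listed above -/
  rel_in_blocks : ∀ p ∈ I, blk (Prod.fst p) = blk (Prod.snd p) ∧
    (btype (blk (Prod.fst p)) = BlockType.typeII ∨
      (Prod.fst p = Prod.snd p ∧ btype (blk (Prod.fst p)) = BlockType.typeLoop))
  /-- partial matching: each vertex of `Q` is incident to at most two blocks -/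
  vertex_two_blocks : ∀ (v : Q.V) (b₁ b₂ b₃ : B),
    (∃ e, blk e = b₁ ∧ (Q.s e = v ∨ Q.t e = v)) →
    (∃ e, blk e = b₂ ∧ (Q.s e = v ∨ Q.t e = v)) →
    (∃ e, blk e = b₃ ∧ (Q.s e = v ∨ Q.t e = v)) →
    b₁ = b₂ ∨ b₁ = b₃ ∨ b₂ = b₃
  /-- no two loop-block vertices are matched -/
  loops_unmatched : ∀ (v : Q.V) (b₁ b₂ : B),
    btype b₁ = BlockType.typeLoop → btype b₂ = BlockType.typeLoop →
    (∃ e, blk e = b₁ ∧ (Q.s e = v ∨ Q.t e = v)) →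
    (∃ e, blk e = b₂ ∧ (Q.s e = v ∨ Q.t e = v)) → b₁ = b₂
  /-- after gluing, no two arrows connect the same pair of vertices in opposite
  directions -/
  no_two_cycles : ∀ a b : Q.E, Q.s a = Q.t b → Q.t a = Q.s b → Q.s a = Q.t a

namespace Quiv

variable (Q : Quiv)

-- auxiliary

def Rel (I : Set (Q.E × Q.E)) (a b : Q.E) : Prop := a = b ∨ (a, b) ∈ I ∨ (b, a) ∈ I

variable {Q} {I : Set (Q.E × Q.E)}

lemma rel_refl (a : Q.E) : Q.Rel I a a := Or.inl rfl

lemma rel_symm {a b : Q.E} (h : Q.Rel I a b) : Q.Rel I b a := by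
  rcases h with rfl | h | h
  · exact Or.inl rfl
  · exact Or.inr (Or.inr h)
  · exact Or.inr (Or.inl h)

/-- structure of a relation: loop or triangle -/
lemma key (hrel : ∀ p ∈ I,
      (Prod.fst p = Prod.snd p ∧ Q.s (Prod.fst p) = Q.t (Prod.fst p)) ∨
      (∃ c : Fin (2 + 1) → Q.E, Q.IsSatCycle I c ∧
        (Function.Injective fun i => Q.s (c i)) ∧
        ∃ i, c i = Prod.fst p ∧ c (i + 1) = Prod.snd p))
    {a b : Q.E} (h : (a, b) ∈ I) :
    (a = b ∧ Q.s a = Q.t a) ∨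
    ∃ x, (b, x) ∈ I ∧ (x, a) ∈ I ∧
      Q.t a = Q.s b ∧ Q.t b = Q.s x ∧ Q.t x = Q.s a ∧
      Q.s a ≠ Q.s b ∧ Q.s b ≠ Q.s x ∧ Q.s a ≠ Q.s x := by
  rcases hrel (a, b) h with h' | ⟨c, hsat, hinj, i, h1, h2⟩
  · exact Or.inl h'
  · right
    have e3 : ∀ j : Fin (2 + 1), j + 1 + 1 + 1 = j := by decide
    have ne1 : ∀ j : Fin (2 + 1), j ≠ j + 1 := by decide
    have ne2 : ∀ j : Fin (2 + 1), j ≠ j + 1 + 1 := by decide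
    have h1' : c i = a := h1
    have h2' : c (i + 1) = b := h2
    subst h1' h2'
    refine ⟨c (i + 1 + 1), (hsat (i + 1)).2, ?_, (hsat i).1, (hsat (i + 1)).1, ?_, ?_, ?_, ?_⟩
    · have := (hsat (i + 1 + 1)).2
      rwa [e3 i] at this
    · have := (hsat (i + 1 + 1)).1
      rwa [e3 i] at this
    · exact fun hs => ne1 i (hinj hs)
    · exact fun hs => ne1 (i + 1) (hinj hs)
    · exact fun hs => ne2 i (hinj hs)

lemma rel_trans (hg : Q.IsGentle I)
    (hrel : ∀ p ∈ I,
      (Prod.fst p = Prod.snd p ∧ Q.s (Prod.fst p) = Q.t (Prod.fst p)) ∨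
      (∃ c : Fin (2 + 1) → Q.E, Q.IsSatCycle I c ∧
        (Function.Injective fun i => Q.s (c i)) ∧
        ∃ i, c i = Prod.fst p ∧ c (i + 1) = Prod.snd p))
    {a b c : Q.E} (hab : Q.Rel I a b) (hbc : Q.Rel I b c) : Q.Rel I a c := by
  rcases hab with rfl | hab | hba
  · exact hbc
  · rcases hbc with rfl | hbc | hcb
    · exact Or.inr (Or.inl hab)
    · rcases key hrel hab with ⟨rfl, -⟩ | ⟨x, hbx, hxa, -⟩
      · exact Or.inr (Or.inl hbc)
      · have : c = x := hg.g3r b c x hbc hbx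
        subst this
        exact Or.inr (Or.inr hxa)
    · exact Or.inl (hg.g3l b a c hab hcb)
  · rcases hbc with rfl | hbc | hcb
    · exact Or.inr (Or.inr hba)
    · exact Or.inl (hg.g3r b a c hba hbc)
    · rcases key hrel hcb with ⟨rfl, -⟩ | ⟨x, hbx, hxc, -⟩
      · exact Or.inr (Or.inr hba)
      · have : a = x := hg.g3r b a x hba hbx
        subst this
        exact Or.inr (Or.inl hxc)

lemma loop_single (hg : Q.IsGentle I) {e : Q.E} (he : (e, e) ∈ I)
    {x : Q.E} (h : Q.Rel I x e) : x = e := by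
  rcases h with rfl | h | h
  · rfl
  · exact hg.g3l e x e h he
  · exact hg.g3r e x e h he

lemma incident (hg : Q.IsGentle I) {v : Q.V} {x y z : Q.E}
    (hx : Q.s x = v ∨ Q.t x = v) (hy : Q.s y = v ∨ Q.t y = v)
    (hz : Q.s z = v ∨ Q.t z = v) :
    Q.Rel I x y ∨ Q.Rel I x z ∨ Q.Rel I y z := by
  have eqcase : x = y ∨ x = z ∨ y = z → Q.Rel I x y ∨ Q.Rel I x z ∨ Q.Rel I y z := by
    rintro (rfl | rfl | rfl)
    · exact Or.inl (rel_refl x)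
    · exact Or.inr (Or.inl (rel_refl x))
    · exact Or.inr (Or.inr (rel_refl y))
  rcases hx with hx | hx <;> rcases hy with hy | hy <;> rcases hz with hz | hz
  · exact eqcase (hg.g1out v x y z hx hy hz)
  · -- x out, y out, z in
    by_cases h1 : (z, x) ∈ I
    · exact Or.inr (Or.inl (Or.inr (Or.inr h1)))
    by_cases h2 : (z, y) ∈ I
    · exact Or.inr (Or.inr (Or.inr (Or.inr h2)))
    exact eqcase (Or.inl (hg.g4r z x y (hz.trans hx.symm) (hz.trans hy.symm) h1 h2))
  · -- x out, y in, z out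
    by_cases h1 : (y, x) ∈ I
    · exact Or.inl (Or.inr (Or.inr h1))
    by_cases h2 : (y, z) ∈ I
    · exact Or.inr (Or.inr (Or.inr (Or.inl h2)))
    exact eqcase (Or.inr (Or.inl (hg.g4r y x z (hy.trans hx.symm) (hy.trans hz.symm) h1 h2)))
  · -- x out, y in, z in
    by_cases h1 : (y, x) ∈ I
    · exact Or.inl (Or.inr (Or.inr h1))
    by_cases h2 : (z, x) ∈ I
    · exact Or.inr (Or.inl (Or.inr (Or.inr h2)))
    exact eqcase (Or.inr (Or.inr (hg.g4l x y z (hy.trans hx.symm) (hz.trans hx.symm) h1 h2)))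
  · -- x in, y out, z out
    by_cases h1 : (x, y) ∈ I
    · exact Or.inl (Or.inr (Or.inl h1))
    by_cases h2 : (x, z) ∈ I
    · exact Or.inr (Or.inl (Or.inr (Or.inl h2)))
    exact eqcase (Or.inr (Or.inr (hg.g4r x y z (hx.trans hy.symm) (hx.trans hz.symm) h1 h2)))
  · -- x in, y out, z in
    by_cases h1 : (x, y) ∈ I
    · exact Or.inl (Or.inr (Or.inl h1))
    by_cases h2 : (z, y) ∈ I
    · exact Or.inr (Or.inr (Or.inr (Or.inr h2)))
    exact eqcase (Or.inr (Or.inl (hg.g4l y x z (hx.trans hy.symm) (hz.trans hy.symm) h1 h2)))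
  · -- x in, y in, z out
    by_cases h1 : (x, z) ∈ I
    · exact Or.inr (Or.inl (Or.inr (Or.inl h1)))
    by_cases h2 : (y, z) ∈ I
    · exact Or.inr (Or.inr (Or.inr (Or.inl h2)))
    exact eqcase (Or.inl (hg.g4l z x y (hx.trans hz.symm) (hy.trans hz.symm) h1 h2))
  · exact eqcase (hg.g1in v x y z hx hy hz)

-- alternating lists

def altList (a b : α) : ℕ → List α
  | 0 => [a]
  | n + 1 => a :: b :: altList a b n

lemma altList_length (a b : α) (n : ℕ) : (altList a b n).length = 2 * n + 1 := by
  induction n with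
  | zero => rfl
  | succ n ih => simp [altList, ih]; omega

lemma altList_head (a b : α) (n : ℕ) : (altList a b n).head? = some a := by
  cases n <;> rfl

lemma altList_chain (P : α → α → Prop) (a b : α) (hab : P a b) (hba : P b a) (n : ℕ) :
    List.Chain' P (altList a b n) := by
  induction n with
  | zero => exact List.isChain_singleton a
  | succ n ih =>
    show List.IsChain P (altList a b (n + 1))
    rw [altList, List.isChain_cons_cons, List.isChain_cons]
    exact ⟨hab, fun y hy => by rw [altList_head] at hy; cases hy; exact hba, ih⟩

lemma inf_path (hfd : {p : List Q.E | p ≠ [] ∧ Q.IsPath p ∧ Q.AvoidsRel I p}.Finite)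
    {a b : Q.E} (h1 : Q.t a = Q.s b) (h2 : Q.t b = Q.s a)
    (h3 : (a, b) ∉ I) (h4 : (b, a) ∉ I) : False := by
  have hinj : Function.Injective (altList a b) := by
    intro m n h
    have := congrArg List.length h
    rw [altList_length, altList_length] at this
    omega
  have hmem : ∀ n, altList a b n ∈ {p : List Q.E | p ≠ [] ∧ Q.IsPath p ∧ Q.AvoidsRel I p} := by
    intro n
    refine ⟨?_, altList_chain _ a b h1 h2 n, altList_chain _ a b h3 h4 n⟩
    cases n <;> simp [altList]
  exact (Set.infinite_of_injective_forall_mem hinj hmem) hfd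

end Quiv

open Quiv in
/-- Let `(Q, I)` be a finite gentle bound quiver, finite dimensional (only finitely many
paths avoid `I`), in which every generator of `I` either equals `δ²` for a loop `δ` or
lies in a saturated 3-cycle with three distinct vertices.  Then `(Q, I)` is
gentle-block-decomposable via blocks of type I, II and loop. -/
theorem stmt8 (Q : Quiv) (I : Set (Q.E × Q.E)) [Finite Q.E] (hg : Q.IsGentle I)
    (hfd : {p : List Q.E | p ≠ [] ∧ Q.IsPath p ∧ Q.AvoidsRel I p}.Finite)
    (hrel : ∀ p ∈ I,
      (Prod.fst p = Prod.snd p ∧ Q.s (Prod.fst p) = Q.t (Prod.fst p)) ∨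
      (∃ c : Fin (2 + 1) → Q.E, Q.IsSatCycle I c ∧
        (Function.Injective fun i => Q.s (c i)) ∧
        ∃ i, c i = Prod.fst p ∧ c (i + 1) = Prod.snd p)) :
    Nonempty (GentleBlockDecomposition Q I) := by
  classical
  have hequiv : Equivalence (Q.Rel I) :=
    ⟨Quiv.rel_refl, Quiv.rel_symm, fun hab hbc => Quiv.rel_trans hg hrel hab hbc⟩
  have qeq : ∀ a b : Q.E, Quot.mk (Q.Rel I) a = Quot.mk (Q.Rel I) b ↔ Q.Rel I a b := by
    intro a b
    exact ⟨fun h => hequiv.eqvGen_iff.mp (Quot.eqvGen_exact h), Quot.sound⟩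
  refine ⟨⟨Quot (Q.Rel I),
    fun b => if ∃ e, Quot.mk (Q.Rel I) e = b ∧ (e, e) ∈ I then BlockType.typeLoop
      else if ∃ e f, Quot.mk (Q.Rel I) e = b ∧ (e, f) ∈ I then BlockType.typeII
      else BlockType.typeI,
    Quot.mk (Q.Rel I), ?_, ?_, ?_, ?_, ?_, ?_, ?_⟩⟩
  · -- typeI blocks
    intro b hb
    split_ifs at hb with hL hT
    obtain ⟨e, he⟩ := Quot.exists_rep b
    refine ⟨e, ?_, fun e' => ⟨fun h => ?_, fun h => h ▸ he⟩⟩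
    · intro hst
      by_cases hee : (e, e) ∈ I
      · exact hL ⟨e, he, hee⟩
      · exact (Quiv.inf_path hfd hst.symm hst.symm hee hee).elim
    · rcases (qeq e' e).mp (h.trans he.symm) with rfl | h' | h'
      · rfl
      · exact absurd ⟨e', e, h, h'⟩ hT
      · exact absurd ⟨e, e', he, h'⟩ hT
  · -- typeII blocks
    intro b hb
    split_ifs at hb with hL hT
    obtain ⟨e, f, hb', hef⟩ := hT
    rcases Quiv.key hrel hef with ⟨rfl, hst⟩ | ⟨x, hfx, hxe, c1, c2, c3, s1, s2, s3⟩
    · exact absurd ⟨e, hb', hef⟩ hL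
    refine ⟨e, f, x, fun e' => ⟨fun h => ?_, ?_⟩,
      fun h => s1 (by rw [h]), fun h => s2 (by rw [h]), fun h => s3 (by rw [h]),
      c1, c2, c3, s1, s2, s3, hef, hfx, hxe⟩
    · rcases (qeq e' e).mp (h.trans hb'.symm) with rfl | h' | h'
      · exact Or.inl rfl
      · exact Or.inr (Or.inr (hg.g3l e e' x h' hxe))
      · exact Or.inr (Or.inl (hg.g3r e e' f h' hef))
    · rintro (rfl | rfl | rfl)
      · exact hb'
      · rw [← hb']; exact Quot.sound (Or.inr (Or.inr hef))
      · rw [← hb']; exact Quot.sound (Or.inr (Or.inl hxe))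
  · -- typeLoop blocks
    intro b hb
    split_ifs at hb with hL
    obtain ⟨e, hb', hee⟩ := hL
    exact ⟨e, (hg.compat (e, e) hee).symm, hee, fun e' =>
      ⟨fun h => Quiv.loop_single hg hee ((qeq e' e).mp (h.trans hb'.symm)),
       fun h => h ▸ hb'⟩⟩
  · -- rel_in_blocks
    intro p hp
    obtain ⟨p1, p2⟩ := p
    refine ⟨Quot.sound (Or.inr (Or.inl hp)), ?_⟩
    rcases Quiv.key hrel hp with ⟨h12, hst⟩ | ⟨x, h2x, hx1, c1, c2, c3, s1, s2, s3⟩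
    · obtain rfl : p1 = p2 := h12
      refine Or.inr ⟨rfl, ?_⟩
      simp only
      rw [if_pos ⟨p1, rfl, hp⟩]
    · refine Or.inl ?_
      simp only
      rw [if_neg, if_pos ⟨p1, p2, rfl, hp⟩]
      rintro ⟨e, heq, hee⟩
      have hpe : p1 = e :=
        Quiv.loop_single hg hee (Quiv.rel_symm ((qeq e p1).mp heq))
      rw [← hpe] at hee
      exact s1 (by rw [hg.g3r p1 p2 p1 hp hee])
  · -- vertex_two_blocks
    rintro v b1 b2 b3 ⟨x, hx, hxv⟩ ⟨y, hy, hyv⟩ ⟨z, hz, hzv⟩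
    rcases Quiv.incident hg hxv hyv hzv with h | h | h
    · exact Or.inl (by rw [← hx, ← hy]; exact Quot.sound h)
    · exact Or.inr (Or.inl (by rw [← hx, ← hz]; exact Quot.sound h))
    · exact Or.inr (Or.inr (by rw [← hy, ← hz]; exact Quot.sound h))
  · -- loops_unmatched
    rintro v b1 b2 ht1 ht2 ⟨x, hx, hxv⟩ ⟨y, hy, hyv⟩
    by_cases hc1 : ∃ e, Quot.mk (Q.Rel I) e = b1 ∧ (e, e) ∈ I
    swap
    · rw [if_neg hc1] at ht1
      split_ifs at ht1
    by_cases hc2 : ∃ e, Quot.mk (Q.Rel I) e = b2 ∧ (e, e) ∈ I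
    swap
    · rw [if_neg hc2] at ht2
      split_ifs at ht2
    obtain ⟨d1, hd1, hdd1⟩ := hc1
    obtain ⟨d2, hd2, hdd2⟩ := hc2
    have hx1 : x = d1 := Quiv.loop_single hg hdd1 ((qeq x d1).mp (hx.trans hd1.symm))
    have hy2 : y = d2 := Quiv.loop_single hg hdd2 ((qeq y d2).mp (hy.trans hd2.symm))
    subst hx1 hy2
    have hst1 : Q.t x = Q.s x := hg.compat (x, x) hdd1
    have hst2 : Q.t y = Q.s y := hg.compat (y, y) hdd2
    have hsx : Q.s x = v := by rcases hxv with h | h; exact h; exact hst1 ▸ h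
    have hsy : Q.s y = v := by rcases hyv with h | h; exact h; exact hst2 ▸ h
    have hxy : x = y := by
      by_cases h1 : (x, y) ∈ I
      · exact (hg.g3r x y x h1 hdd1).symm
      · by_cases h2 : (y, x) ∈ I
        · exact (hg.g3l x y x h2 hdd1).symm
        · exact (Quiv.inf_path hfd (hst1.trans (hsx.trans hsy.symm))
            (hst2.trans (hsy.trans hsx.symm)) h1 h2).elim
    rw [← hd1, ← hd2, hxy]
  · -- no_two_cycles
    intro a b hab hba
    by_cases h1 : (a, b) ∈ I
    · rcases Quiv.key hrel h1 with ⟨rfl, hst⟩ | ⟨x, _, _, c1, c2, c3, s1, s2, s3⟩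
      · exact hst
      · exact (s3 (hab.trans c2)).elim
    by_cases h2 : (b, a) ∈ I
    · rcases Quiv.key hrel h2 with ⟨heq, hst⟩ | ⟨x, _, _, c1, c2, c3, s1, s2, s3⟩
      · subst heq; exact hst
      · exact (s3 (hba.symm.trans c2)).elim
    exact (Quiv.inf_path hfd hba hab.symm h1 h2).elim
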